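/- Let G̃ be the group presented by generators ξ₁, ξ₂, ξ₃, z with relations ξ₁³ = ξ₂³ = ξ₃³ = z³ = 1, z = [ξ₁,ξ₂] is central, ξ₂ = [ξ₁,ξ₃], and [ξ₂,ξ₃] = 1. Then G̃ has order 81. -/

import Mathlib

namespace Stmt13

private def ξ₁ : FreeGroup (Fin 4) := FreeGroup.of 0
private def ξ₂ : FreeGroup (Fin 4) := FreeGroup.of 1
private def ξ₃ : FreeGroup (Fin 4) := FreeGroup.of 2
private def z : FreeGroup (Fin 4) := FreeGroup.of 3

/-- Relators: `ξ₁³ = ξ₂³ = ξ₃³ = z³ = 1`, `z = [ξ₁,ξ₂]` central,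
`ξ₂ = [ξ₁,ξ₃]`, `[ξ₂,ξ₃] = 1`, where `[x,y] = x·y·x⁻¹·y⁻¹`. -/
def rels : Set (FreeGroup (Fin 4)) :=
  {ξ₁ ^ 3, ξ₂ ^ 3, ξ₃ ^ 3, z ^ 3,
   z * (ξ₁ * ξ₂ * ξ₁⁻¹ * ξ₂⁻¹)⁻¹,
   z * ξ₁ * z⁻¹ * ξ₁⁻¹, z * ξ₂ * z⁻¹ * ξ₂⁻¹, z * ξ₃ * z⁻¹ * ξ₃⁻¹,
   ξ₂ * (ξ₁ * ξ₃ * ξ₁⁻¹ * ξ₃⁻¹)⁻¹,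
   ξ₂ * ξ₃ * ξ₂⁻¹ * ξ₃⁻¹}

/-! ### A concrete group of order 81 -/

structure V where
  a : ZMod 3
  c : ZMod 3
  d : ZMod 3
  b : ZMod 3
deriving DecidableEq, Fintype

namespace V

instance : Mul V := ⟨fun x y => ⟨x.a + y.a, x.c + y.c - x.b * y.a,
    x.d + y.d + x.b * (2 * y.a * (y.a + 1)) - x.c * y.a, x.b + y.b⟩⟩
instance : One V := ⟨⟨0,0,0,0⟩⟩
instance : Inv V := ⟨fun x => ⟨-x.a, -x.c - x.a * x.b,
    -x.d - x.b * (2 * x.a * x.a + x.a) - x.c * x.a, -x.b⟩⟩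

theorem mul_a (x y : V) : (x * y).a = x.a + y.a := rfl
theorem mul_c (x y : V) : (x * y).c = x.c + y.c - x.b * y.a := rfl
theorem mul_d (x y : V) :
    (x * y).d = x.d + y.d + x.b * (2 * y.a * (y.a + 1)) - x.c * y.a := rfl
theorem mul_b (x y : V) : (x * y).b = x.b + y.b := rfl

instance : Group V where
  mul_assoc x y z := by
    have h3 : ∀ u : ZMod 3, 3 * u = 0 := by decide
    show V.mk _ _ _ _ = V.mk _ _ _ _
    simp only [V.mk.injEq, mul_a, mul_c, mul_d, mul_b]
    refine ⟨by ring, by ring, ?_, by ring⟩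
    linear_combination -h3 (x.b * y.a * z.a)
  one_mul := by decide
  mul_one := by decide
  inv_mul_cancel := by decide

theorem card_V : Nat.card V = 81 := by
  rw [Nat.card_eq_fintype_card]; rfl

end V

/-! ### Generators in the presented group -/

local notation "P" => PresentedGroup rels

private def A : P := PresentedGroup.of 0
private def B : P := PresentedGroup.of 1
private def C : P := PresentedGroup.of 2
private def Z : P := PresentedGroup.of 3

private lemma mkrel {r : FreeGroup (Fin 4)} (h : r ∈ rels) :
    PresentedGroup.mk rels r = 1 :=
  (QuotientGroup.eq_one_iff r).mpr (Subgroup.subset_normalClosure h)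

private lemma rA3 : A ^ 3 = 1 := by
  have h := mkrel (show ξ₁ ^ 3 ∈ rels by simp [rels])
  simp [ξ₁, map_pow] at h; exact h

private lemma rB3 : B ^ 3 = 1 := by
  have h := mkrel (show ξ₂ ^ 3 ∈ rels by simp [rels])
  simp [ξ₂, map_pow] at h; exact h

private lemma rC3 : C ^ 3 = 1 := by
  have h := mkrel (show ξ₃ ^ 3 ∈ rels by simp [rels])
  simp [ξ₃, map_pow] at h; exact h

private lemma rZ3 : Z ^ 3 = 1 := by
  have h := mkrel (show z ^ 3 ∈ rels by simp [rels])
  simp [z, map_pow] at h; exact h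

private lemma cZA : Commute Z A := by
  have h := mkrel (show z * ξ₁ * z⁻¹ * ξ₁⁻¹ ∈ rels by simp [rels])
  simp only [ξ₁, z, map_mul, map_inv] at h
  have h' : Z * A * Z⁻¹ = A := mul_inv_eq_one.mp h
  show Z * A = A * Z
  calc Z * A = (Z * A * Z⁻¹) * Z := by group
  _ = A * Z := by rw [h']

private lemma cZB : Commute Z B := by
  have h := mkrel (show z * ξ₂ * z⁻¹ * ξ₂⁻¹ ∈ rels by simp [rels])
  simp only [ξ₂, z, map_mul, map_inv] at h
  have h' : Z * B * Z⁻¹ = B := mul_inv_eq_one.mp h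
  show Z * B = B * Z
  calc Z * B = (Z * B * Z⁻¹) * Z := by group
  _ = B * Z := by rw [h']

private lemma cZC : Commute Z C := by
  have h := mkrel (show z * ξ₃ * z⁻¹ * ξ₃⁻¹ ∈ rels by simp [rels])
  simp only [ξ₃, z, map_mul, map_inv] at h
  have h' : Z * C * Z⁻¹ = C := mul_inv_eq_one.mp h
  show Z * C = C * Z
  calc Z * C = (Z * C * Z⁻¹) * Z := by group
  _ = C * Z := by rw [h']

private lemma cBC : Commute B C := by
  have h := mkrel (show ξ₂ * ξ₃ * ξ₂⁻¹ * ξ₃⁻¹ ∈ rels by simp [rels])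
  simp only [ξ₂, ξ₃, map_mul, map_inv] at h
  have h' : B * C * B⁻¹ = C := mul_inv_eq_one.mp h
  show B * C = C * B
  calc B * C = (B * C * B⁻¹) * B := by group
  _ = C * B := by rw [h']

private lemma rBA : B * A = Z⁻¹ * (A * B) := by
  have h := mkrel (show Stmt13.z * (ξ₁ * ξ₂ * ξ₁⁻¹ * ξ₂⁻¹)⁻¹ ∈ rels by simp [rels])
  simp only [ξ₁, ξ₂, z, map_mul, map_inv] at h
  have h' : Z = A * B * A⁻¹ * B⁻¹ := mul_inv_eq_one.mp h
  rw [h']; group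

private lemma rCA : C * A = B⁻¹ * (A * C) := by
  have h := mkrel (show ξ₂ * (ξ₁ * ξ₃ * ξ₁⁻¹ * ξ₃⁻¹)⁻¹ ∈ rels by simp [rels])
  simp only [ξ₁, ξ₂, ξ₃, map_mul, map_inv] at h
  have h' : B = A * C * A⁻¹ * C⁻¹ := mul_inv_eq_one.mp h
  rw [h']; group

section helpers
variable {G : Type*} [Group G]

private lemma comm_cont {x y : G} (h : Commute x y) (r : G) :
    x * (y * r) = y * (x * r) := by rw [← mul_assoc, h.eq, mul_assoc]

private lemma pow_mod3 {x : G} (hx : x ^ 3 = 1) (m : ℕ) : x ^ m = x ^ (m % 3) := by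
  conv_lhs => rw [← Nat.div_add_mod m 3]
  rw [pow_add, pow_mul, hx, one_pow, one_mul]

private lemma pow_val_add {x : G} (hx : x ^ 3 = 1) (i j : ZMod 3) :
    x ^ (i + j).val = x ^ i.val * x ^ j.val := by
  rw [← pow_add, ZMod.val_add, ← pow_mod3 hx]

private lemma pow_val_neg {x : G} (hx : x ^ 3 = 1) (i : ZMod 3) :
    x ^ (-i).val = (x ^ i.val)⁻¹ := by
  apply eq_inv_of_mul_eq_one_left
  rw [← pow_val_add hx, neg_add_cancel]
  simp

private lemma pow_val_sub {x : G} (hx : x ^ 3 = 1) (i j : ZMod 3) :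
    x ^ i.val * (x ^ j.val)⁻¹ = x ^ (i - j).val := by
  rw [sub_eq_add_neg, pow_val_add hx, pow_val_neg hx]

end helpers

private lemma BpowA (n : ℕ) : B ^ n * A = (Z ^ n)⁻¹ * (A * B ^ n) := by
  induction n with
  | zero => simp
  | succ n ih =>
    calc B ^ (n + 1) * A = B ^ n * (B * A) := by rw [pow_succ, mul_assoc]
    _ = B ^ n * (Z⁻¹ * (A * B)) := by rw [rBA]
    _ = Z⁻¹ * (B ^ n * (A * B)) := comm_cont (cZB.pow_right n).inv_left.symm _
    _ = Z⁻¹ * ((B ^ n * A) * B) := by rw [mul_assoc]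
    _ = Z⁻¹ * (((Z ^ n)⁻¹ * (A * B ^ n)) * B) := by rw [ih]
    _ = (Z ^ (n + 1))⁻¹ * (A * B ^ (n + 1)) := by
        rw [pow_succ, pow_succ, mul_inv_rev]
        group

private lemma CpowA (n : ℕ) : C ^ n * A = (B ^ n)⁻¹ * (A * C ^ n) := by
  induction n with
  | zero => simp
  | succ n ih =>
    calc C ^ (n + 1) * A = C ^ n * (C * A) := by rw [pow_succ, mul_assoc]
    _ = C ^ n * (B⁻¹ * (A * C)) := by rw [rCA]
    _ = B⁻¹ * (C ^ n * (A * C)) := comm_cont ((cBC.pow_right n).inv_left.symm) _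
    _ = B⁻¹ * ((C ^ n * A) * C) := by rw [mul_assoc]
    _ = B⁻¹ * (((B ^ n)⁻¹ * (A * C ^ n)) * C) := by rw [ih]
    _ = (B ^ (n + 1))⁻¹ * (A * C ^ (n + 1)) := by
        rw [pow_succ, pow_succ, mul_inv_rev]
        group

private lemma BpowA_cont (n : ℕ) (r : P) :
    B ^ n * (A * r) = (Z ^ n)⁻¹ * (A * (B ^ n * r)) := by
  rw [← mul_assoc, BpowA, mul_assoc, mul_assoc]

private lemma CpowA_cont (n : ℕ) (r : P) :
    C ^ n * (A * r) = (B ^ n)⁻¹ * (A * (C ^ n * r)) := by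
  rw [← mul_assoc, CpowA, mul_assoc, mul_assoc]
/-! ### The normal form map `g` -/

private def g (v : V) : P :=
  A ^ v.a.val * B ^ v.c.val * Z ^ v.d.val * C ^ v.b.val

private lemma repack (a m d' k : ZMod 3) (w : P) (h : d' - m = k) :
    (Z ^ m.val)⁻¹ * (A ^ a.val * (A * (B ^ m.val * (Z ^ d'.val * w)))) =
    A ^ (a + 1).val * (B ^ m.val * (Z ^ k.val * w)) := by
  subst h
  rw [pow_val_add rA3, show ((1 : ZMod 3)).val = 1 from rfl, pow_one]
  rw [comm_cont ((cZA.pow_pow m.val a.val).inv_left)]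
  rw [comm_cont ((cZA.pow_left m.val).inv_left)]
  rw [comm_cont ((cZB.pow_pow m.val m.val).inv_left)]
  rw [← mul_assoc (Z ^ m.val)⁻¹, ← pow_val_neg rZ3, ← pow_val_add rZ3]
  have e : -m + d' = d' - m := by ring
  rw [e]
  simp only [mul_assoc]

private lemma stepA (v : V) :
    g v * A = g ⟨v.a + 1, v.c - v.b, v.d + v.b - v.c, v.b⟩ := by
  obtain ⟨va, vc, vd, vb⟩ := v
  simp only [g]
  calc A ^ va.val * B ^ vc.val * Z ^ vd.val * C ^ vb.val * A
      = A ^ va.val * (B ^ vc.val * (Z ^ vd.val * (C ^ vb.val * A))) := by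
        simp only [mul_assoc]
    _ = A ^ va.val * (B ^ vc.val * (Z ^ vd.val *
          ((B ^ vb.val)⁻¹ * (A * C ^ vb.val)))) := by rw [CpowA]
    _ = A ^ va.val * (B ^ vc.val * ((B ^ vb.val)⁻¹ *
          (Z ^ vd.val * (A * C ^ vb.val)))) := by
        rw [comm_cont ((cZB.pow_pow vd.val vb.val).inv_right)]
    _ = A ^ va.val * (B ^ vc.val * ((B ^ vb.val)⁻¹ *
          (A * (Z ^ vd.val * C ^ vb.val)))) := by
        rw [comm_cont (cZA.pow_left vd.val)]
    _ = A ^ va.val * (B ^ (vc - vb).val *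
          (A * (Z ^ vd.val * C ^ vb.val))) := by
        rw [← mul_assoc (B ^ vc.val), pow_val_sub rB3]
    _ = A ^ va.val * ((Z ^ (vc - vb).val)⁻¹ * (A * (B ^ (vc - vb).val *
          (Z ^ vd.val * C ^ vb.val)))) := by rw [BpowA_cont]
    _ = (Z ^ (vc - vb).val)⁻¹ * (A ^ va.val * (A * (B ^ (vc - vb).val *
          (Z ^ vd.val * C ^ vb.val)))) := by
        rw [comm_cont ((cZA.pow_pow (vc - vb).val va.val).inv_left.symm)]
    _ = A ^ (va + 1).val * (B ^ (vc - vb).val *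
          (Z ^ (vd + vb - vc).val * C ^ vb.val)) :=
        repack va (vc - vb) vd (vd + vb - vc) _ (by ring)
    _ = A ^ (va + 1).val * B ^ (vc - vb).val *
          (Z ^ (vd + vb - vc).val * C ^ vb.val) := by simp only [mul_assoc]
    _ = A ^ (va + 1).val * B ^ (vc - vb).val * Z ^ (vd + vb - vc).val
          * C ^ vb.val := by simp only [mul_assoc]

private lemma stepB (v : V) :
    g v * B = g ⟨v.a, v.c + 1, v.d, v.b⟩ := by
  obtain ⟨va, vc, vd, vb⟩ := v
  simp only [g]
  have hB1 : B ^ vc.val * B = B ^ (vc + 1).val := by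
    rw [pow_val_add rB3, show ((1 : ZMod 3)).val = 1 from rfl, pow_one]
  calc A ^ va.val * B ^ vc.val * Z ^ vd.val * C ^ vb.val * B
      = A ^ va.val * (B ^ vc.val * (Z ^ vd.val * (C ^ vb.val * B))) := by
        simp only [mul_assoc]
    _ = A ^ va.val * (B ^ vc.val * (Z ^ vd.val * (B * C ^ vb.val))) := by
        rw [((cBC.pow_right vb.val).symm).eq]
    _ = A ^ va.val * (B ^ vc.val * (B * (Z ^ vd.val * C ^ vb.val))) := by
        rw [comm_cont (cZB.pow_left vd.val)]
    _ = A ^ va.val * (B ^ (vc + 1).val * (Z ^ vd.val * C ^ vb.val)) := by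
        rw [← mul_assoc (B ^ vc.val), hB1]
    _ = A ^ va.val * B ^ (vc + 1).val * Z ^ vd.val * C ^ vb.val := by
        simp only [mul_assoc]

private lemma stepZ (v : V) :
    g v * Z = g ⟨v.a, v.c, v.d + 1, v.b⟩ := by
  obtain ⟨va, vc, vd, vb⟩ := v
  simp only [g]
  have hZ1 : Z ^ vd.val * Z = Z ^ (vd + 1).val := by
    rw [pow_val_add rZ3, show ((1 : ZMod 3)).val = 1 from rfl, pow_one]
  calc A ^ va.val * B ^ vc.val * Z ^ vd.val * C ^ vb.val * Z
      = A ^ va.val * (B ^ vc.val * (Z ^ vd.val * (C ^ vb.val * Z))) := by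
        simp only [mul_assoc]
    _ = A ^ va.val * (B ^ vc.val * (Z ^ vd.val * (Z * C ^ vb.val))) := by
        rw [((cZC.pow_right vb.val).symm).eq]
    _ = A ^ va.val * (B ^ vc.val * (Z ^ (vd + 1).val * C ^ vb.val)) := by
        rw [← mul_assoc (Z ^ vd.val), hZ1]
    _ = A ^ va.val * B ^ vc.val * Z ^ (vd + 1).val * C ^ vb.val := by
        simp only [mul_assoc]

private lemma stepC (v : V) :
    g v * C = g ⟨v.a, v.c, v.d, v.b + 1⟩ := by
  obtain ⟨va, vc, vd, vb⟩ := v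
  simp only [g]
  have hC1 : C ^ vb.val * C = C ^ (vb + 1).val := by
    rw [pow_val_add rC3, show ((1 : ZMod 3)).val = 1 from rfl, pow_one]
  rw [mul_assoc _ (C ^ vb.val) C, hC1]
/-! ### Multiplicativity of `g` and the final count -/

private def eA : V := ⟨1,0,0,0⟩
private def eB : V := ⟨0,1,0,0⟩
private def eZ : V := ⟨0,0,1,0⟩
private def eC : V := ⟨0,0,0,1⟩

private lemma hA : ∀ w : V, w * eA = ⟨w.a + 1, w.c - w.b, w.d + w.b - w.c, w.b⟩ := by decide
private lemma hB : ∀ w : V, w * eB = ⟨w.a, w.c + 1, w.d, w.b⟩ := by decide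
private lemma hZ : ∀ w : V, w * eZ = ⟨w.a, w.c, w.d + 1, w.b⟩ := by decide
private lemma hC : ∀ w : V, w * eC = ⟨w.a, w.c, w.d, w.b + 1⟩ := by decide

private lemma decompV : ∀ v : V,
    v = eA ^ v.a.val * eB ^ v.c.val * eZ ^ v.d.val * eC ^ v.b.val := by decide

private lemma gpowA (u : V) (n : ℕ) : g u * A ^ n = g (u * eA ^ n) := by
  induction n with
  | zero => simp
  | succ n ih => rw [pow_succ, pow_succ, ← mul_assoc, ih, stepA, ← mul_assoc, hA]

private lemma gpowB (u : V) (n : ℕ) : g u * B ^ n = g (u * eB ^ n) := by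
  induction n with
  | zero => simp
  | succ n ih => rw [pow_succ, pow_succ, ← mul_assoc, ih, stepB, ← mul_assoc, hB]

private lemma gpowZ (u : V) (n : ℕ) : g u * Z ^ n = g (u * eZ ^ n) := by
  induction n with
  | zero => simp
  | succ n ih => rw [pow_succ, pow_succ, ← mul_assoc, ih, stepZ, ← mul_assoc, hZ]

private lemma gpowC (u : V) (n : ℕ) : g u * C ^ n = g (u * eC ^ n) := by
  induction n with
  | zero => simp
  | succ n ih => rw [pow_succ, pow_succ, ← mul_assoc, ih, stepC, ← mul_assoc, hC]

private lemma gmul (u v : V) : g u * g v = g (u * v) := by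
  conv_lhs => rw [show g v = A ^ v.a.val * B ^ v.c.val * Z ^ v.d.val * C ^ v.b.val from rfl]
  conv_rhs => rw [decompV v]
  simp only [← mul_assoc]
  rw [gpowA, gpowB, gpowZ, gpowC]

private lemma g_one : g 1 = 1 := by
  show A ^ (0 : ZMod 3).val * B ^ (0 : ZMod 3).val * Z ^ (0 : ZMod 3).val
      * C ^ (0 : ZMod 3).val = 1
  rw [show (0 : ZMod 3).val = 0 from rfl]
  simp

private def H : Subgroup P where
  carrier := Set.range g
  one_mem' := ⟨1, g_one⟩
  mul_mem' := by rintro x y ⟨u, rfl⟩ ⟨v, rfl⟩; exact ⟨u * v, (gmul u v).symm⟩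
  inv_mem' := by
    rintro x ⟨u, rfl⟩
    refine ⟨u⁻¹, (inv_eq_of_mul_eq_one_right ?_).symm⟩
    rw [gmul, mul_inv_cancel, g_one]

private lemma gA : g eA = A := by
  show A ^ (1 : ZMod 3).val * B ^ (0 : ZMod 3).val * Z ^ (0 : ZMod 3).val
      * C ^ (0 : ZMod 3).val = A
  rw [show (0 : ZMod 3).val = 0 from rfl, show (1 : ZMod 3).val = 1 from rfl]
  simp

private lemma gB : g eB = B := by
  show A ^ (0 : ZMod 3).val * B ^ (1 : ZMod 3).val * Z ^ (0 : ZMod 3).val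
      * C ^ (0 : ZMod 3).val = B
  rw [show (0 : ZMod 3).val = 0 from rfl, show (1 : ZMod 3).val = 1 from rfl]
  simp

private lemma gZ : g eZ = Z := by
  show A ^ (0 : ZMod 3).val * B ^ (0 : ZMod 3).val * Z ^ (1 : ZMod 3).val
      * C ^ (0 : ZMod 3).val = Z
  rw [show (0 : ZMod 3).val = 0 from rfl, show (1 : ZMod 3).val = 1 from rfl]
  simp

private lemma gC : g eC = C := by
  show A ^ (0 : ZMod 3).val * B ^ (0 : ZMod 3).val * Z ^ (0 : ZMod 3).val
      * C ^ (1 : ZMod 3).val = C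
  rw [show (0 : ZMod 3).val = 0 from rfl, show (1 : ZMod 3).val = 1 from rfl]
  simp

private lemma g_surj : Function.Surjective g := by
  intro x
  refine PresentedGroup.generated_by rels H ?_ x
  intro j
  fin_cases j
  · exact ⟨eA, gA⟩
  · exact ⟨eB, gB⟩
  · exact ⟨eC, gC⟩
  · exact ⟨eZ, gZ⟩

/-! ### The homomorphism to `V` -/

private def fV : Fin 4 → V
  | 0 => eA
  | 1 => eB
  | 2 => eC
  | 3 => eZ

private lemma frels : ∀ r ∈ rels, FreeGroup.lift fV r = 1 := by
  intro r hr
  simp only [rels, Set.mem_insert_iff, Set.mem_singleton_iff] at hr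
  rcases hr with h | h | h | h | h | h | h | h | h | h <;> subst h <;>
    simp only [ξ₁, ξ₂, ξ₃, z, map_mul, map_pow, map_inv, FreeGroup.lift_apply_of] <;>
    decide

private def φ : P →* V := PresentedGroup.toGroup frels

private lemma φg : ∀ v : V, φ (g v) = v := by
  have h0 : φ A = eA := PresentedGroup.toGroup.of frels
  have h1 : φ B = eB := PresentedGroup.toGroup.of frels
  have h2 : φ C = eC := PresentedGroup.toGroup.of frels
  have h3 : φ Z = eZ := PresentedGroup.toGroup.of frels
  intro v
  simp only [g, map_mul, map_pow, h0, h1, h2, h3]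
  exact (decompV v).symm

private lemma φ_bij : Function.Bijective φ := by
  constructor
  · intro x y h
    obtain ⟨u, rfl⟩ := g_surj x
    obtain ⟨v, rfl⟩ := g_surj y
    rw [φg, φg] at h
    rw [h]
  · intro v
    exact ⟨g v, φg v⟩

theorem card_presented_eq_81 : Nat.card (PresentedGroup rels) = 81 := by
  rw [Nat.card_eq_of_bijective φ φ_bij, V.card_V]
end Stmt13
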